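/- arXiv:1912.01174 — 2 statements merged into one kernel-verified Lean document; each statement's English description precedes it below -/
import Mathlib

section
/- Let M be a real 2m×2m matrix satisfying M^T J₀ M = C · J₀ with C > 1. Then the number of eigenvalues of M (counted with algebraic multiplicity) of modulus strictly less than 1 is at most m. -/
open Matrix Polynomial

lemma my_eval_charpoly {n : Type*} [Fintype n] [DecidableEq n] {R : Type*} [CommRing R]
    (A : Matrix n n R) (x : R) : A.charpoly.eval x = (x • (1 : Matrix n n R) - A).det := by
  rw [Matrix.charpoly, ← Polynomial.coe_evalRingHom, RingHom.map_det]
  congr 1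
  ext i j
  by_cases h : i = j
  · subst h
    simp [Matrix.charmatrix_apply_eq, Matrix.one_apply, Matrix.smul_apply]
  · simp [Matrix.charmatrix_apply_ne _ _ _ h, Matrix.one_apply_ne h]

lemma my_J_map (m : ℕ) : (Matrix.J (Fin m) ℝ).map (algebraMap ℝ ℂ) = Matrix.J (Fin m) ℂ := by
  ext i j
  cases i <;> cases j <;>
    simp [Matrix.J, Matrix.fromBlocks, Matrix.one_apply] <;> split_ifs <;> simp

/-- If `M` is a real `2m × 2m` matrix with `Mᵀ J₀ M = C • J₀` for some
`C > 1`, then the number of eigenvalues of `M` (counted with algebraic multiplicity,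
i.e. counted in the multiset of complex roots of the characteristic polynomial)
of modulus strictly less than `1` is at most `m`. -/
theorem conformal_symplectic_eigenvalues_modulus_lt_one (m : ℕ) (C : ℝ) (hC : 1 < C)
    (M : Matrix (Fin m ⊕ Fin m) (Fin m ⊕ Fin m) ℝ)
    (hconf : Mᵀ * Matrix.J (Fin m) ℝ * M = C • Matrix.J (Fin m) ℝ) :
    (((M.map (algebraMap ℝ ℂ)).charpoly.roots.filter
      (fun μ => ‖μ‖ < 1)).card ≤ m) := by
  set N : Matrix (Fin m ⊕ Fin m) (Fin m ⊕ Fin m) ℂ := M.map (algebraMap ℝ ℂ) with hN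
  set Jc : Matrix (Fin m ⊕ Fin m) (Fin m ⊕ Fin m) ℂ := Matrix.J (Fin m) ℂ with hJc
  have hcardF : Fintype.card (Fin m ⊕ Fin m) = m + m := by simp
  -- relation over ℂ
  have h1 : Nᵀ * Jc * N = (C : ℂ) • Jc := by
    have h := congrArg
      (fun A : Matrix (Fin m ⊕ Fin m) (Fin m ⊕ Fin m) ℝ =>
        (RingHom.mapMatrix (algebraMap ℝ ℂ)) A) hconf
    simp only [RingHom.mapMatrix_apply] at h
    rw [Matrix.map_mul, Matrix.map_mul, Matrix.transpose_map, my_J_map] at h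
    rw [hN, hJc, h]
    ext i j
    have := congrFun (congrFun (my_J_map m) i) j
    simp only [Matrix.map_apply, Matrix.smul_apply, smul_eq_mul, _root_.map_mul] at *
    rw [this]
    norm_cast
  have hdetJ : det Jc ≠ 0 := (Matrix.isUnit_det_J (Fin m) ℂ).ne_zero
  have hCne : (C : ℂ) ≠ 0 := by
    norm_cast; linarith
  have hdetN : det N ≠ 0 := by
    have h2 := congrArg det h1
    rw [det_mul, det_mul, det_transpose, det_smul, hcardF] at h2
    have h3 : det N ^ 2 * det Jc = (C : ℂ) ^ (m + m) * det Jc := by ring_nf; ring_nf at h2; linear_combination h2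
    have h4 : det N ^ 2 = (C : ℂ) ^ (m + m) := mul_right_cancel₀ hdetJ h3
    intro h0
    rw [h0] at h4
    exact pow_ne_zero _ hCne (by simpa using h4.symm)
  set p := N.charpoly with hp
  have hmonic : p.Monic := N.charpoly_monic
  have hsplits : p.Splits := IsAlgClosed.splits p
  set R := p.roots with hR
  have hcard : R.card = m + m := by
    rw [hR, (Polynomial.splits_iff_card_roots).mp hsplits, Matrix.charpoly_natDegree_eq_dim, hcardF]
  have hprodform : p = (R.map fun μ => X - Polynomial.C μ).prod :=
    hsplits.eq_prod_roots_of_monic hmonic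
  have hdetprod : det N = R.prod := Matrix.det_eq_prod_roots_charpoly N
  have h0R : (0 : ℂ) ∉ R := fun h => hdetN (by rw [hdetprod]; exact Multiset.prod_eq_zero h)
  set q : Polynomial ℂ := (R.map fun μ => X - Polynomial.C ((C : ℂ)/μ)).prod with hqdef
  have key : ∀ x : ℂ, x ≠ 0 → p.eval x = q.eval x := by
    intro x hx
    have e1 : Nᵀ * Jc * (x • 1 - N) = (x • Nᵀ - (C : ℂ) • 1) * Jc := by
      calc Nᵀ * Jc * (x • 1 - N) = x • (Nᵀ * Jc) - Nᵀ * Jc * N := by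
            rw [mul_sub, Matrix.mul_smul, mul_one]
        _ = x • (Nᵀ * Jc) - (C : ℂ) • Jc := by rw [h1]
        _ = (x • Nᵀ - (C : ℂ) • 1) * Jc := by
            rw [Matrix.sub_mul, Matrix.smul_mul, Matrix.smul_mul, one_mul]
    have e2 := congrArg det e1
    rw [det_mul, det_mul, det_mul, det_transpose] at e2
    have e3 : det N * p.eval x = det (x • Nᵀ - (C : ℂ) • 1) := by
      apply mul_right_cancel₀ hdetJ
      rw [my_eval_charpoly]
      linear_combination e2
    have e4 : x • Nᵀ - (C : ℂ) • 1 = (x • N - (C : ℂ) • 1)ᵀ := by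
      rw [Matrix.transpose_sub, Matrix.transpose_smul, Matrix.transpose_smul, Matrix.transpose_one]
    have e5 : x • N - (C : ℂ) • (1 : Matrix (Fin m ⊕ Fin m) (Fin m ⊕ Fin m) ℂ)
        = (-x) • (((C : ℂ)/x) • (1 : Matrix (Fin m ⊕ Fin m) (Fin m ⊕ Fin m) ℂ) - N) := by
      have h' : (-x) * ((C : ℂ)/x) = -(C : ℂ) := by field_simp
      rw [smul_sub, smul_smul, h']
      module
    have e6 : det (x • Nᵀ - (C : ℂ) • 1) = (-x) ^ (m + m) * p.eval ((C : ℂ)/x) := by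
      rw [e4, det_transpose, e5, det_smul, hcardF, my_eval_charpoly]
    have e7 : p.eval ((C : ℂ)/x) = (R.map fun μ => (C : ℂ)/x - μ).prod := by
      conv_lhs => rw [hprodform]
      rw [Polynomial.eval_multiset_prod, Multiset.map_map]
      simp
    have e8 : (-x) ^ (m + m) * (R.map fun μ => (C : ℂ)/x - μ).prod
        = (R.map fun μ => μ * x - (C : ℂ)).prod := by
      rw [← hcard, ← Multiset.prod_replicate, ← Multiset.map_const' R (-x), ← Multiset.prod_map_mul]
      apply congrArg
      apply Multiset.map_congr rfl
      intro μ hμ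
      field_simp
      ring
    have e9 : (R.map fun μ => μ * x - (C : ℂ)).prod
        = R.prod * (R.map fun μ => x - (C : ℂ)/μ).prod := by
      have : (R.map fun μ => μ * x - (C : ℂ)) = R.map fun μ => μ * (x - (C : ℂ)/μ) := by
        apply Multiset.map_congr rfl
        intro μ hμ
        have hμ0 : μ ≠ 0 := fun h => h0R (h ▸ hμ)
        field_simp
      rw [this, Multiset.prod_map_mul]
      congr 1
      simp
    have e10 : q.eval x = (R.map fun μ => x - (C : ℂ)/μ).prod := by
      rw [hqdef, Polynomial.eval_multiset_prod, Multiset.map_map]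
      simp
    apply mul_left_cancel₀ hdetN
    rw [e3, e6, e7, e8, e9, e10, hdetprod]
  have hpq : p = q := by
    apply Polynomial.eq_of_infinite_eval_eq
    apply Set.Infinite.mono (s := {x : ℂ | x ≠ 0})
    · intro x hx; exact key x hx
    · have : ({x : ℂ | x ≠ 0}) = ({0} : Set ℂ)ᶜ := by ext x; simp
      rw [this]
      exact Set.Finite.infinite_compl (Set.finite_singleton 0)
  have hRmap : R = R.map (fun μ => (C : ℂ)/μ) := by
    conv_lhs => rw [hR, hpq, hqdef]
    rw [show (Multiset.map (fun μ => X - Polynomial.C ((C : ℂ)/μ)) R)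
        = Multiset.map (fun a => X - Polynomial.C a) (R.map fun μ => (C : ℂ)/μ) by
      rw [Multiset.map_map]; rfl]
    exact Polynomial.roots_multiset_prod_X_sub_C _
  -- counting
  have hcnt : (R.filter (fun μ => ‖μ‖ < 1)).card
      = (R.filter (fun μ => ‖(C : ℂ)/μ‖ < 1)).card := by
    conv_lhs => rw [hRmap]
    rw [Multiset.filter_map, Multiset.card_map]
    rfl
  have hdisj : ∀ μ ∈ R, ¬(‖μ‖ < 1 ∧ ‖(C : ℂ)/μ‖ < 1) := by
    intro μ hμ ⟨ha, hb⟩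
    have hμ0 : μ ≠ 0 := fun h => h0R (h ▸ hμ)
    have habs : ‖μ‖ > 0 := by
      simpa using (norm_pos_iff.mpr hμ0)
    rw [norm_div, Complex.norm_real, Real.norm_eq_abs, abs_of_pos (by linarith : (0:ℝ) < C),
      div_lt_one habs] at hb
    linarith
  have hfadd := Multiset.filter_add_filter (fun μ => ‖μ‖ < 1)
    (fun μ => ‖(C : ℂ)/μ‖ < 1) R
  have hnil : R.filter (fun μ => ‖μ‖ < 1 ∧ ‖(C : ℂ)/μ‖ < 1) = 0 :=
    Multiset.filter_eq_nil.mpr hdisj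
  rw [hnil, add_zero] at hfadd
  have hle : (R.filter (fun μ => ‖μ‖ < 1)).card
      + (R.filter (fun μ => ‖(C : ℂ)/μ‖ < 1)).card ≤ m + m := by
    rw [← Multiset.card_add, hfadd, ← hcard]
    exact Multiset.card_le_card (Multiset.filter_le _ R)
  rw [← hcnt] at hle
  omega
end

section
/- Let M be a real 2m×2m matrix with M^T J₀ M = C·J₀ for C > 1, and suppose no eigenvalue of M has modulus 1 or equals 0. Define E⁻ as the sum of generalized eigenspaces for eigenvalues of modulus < 1. Then dim E⁻ ≤ m. -/
open Matrix Polynomial Module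

section CssAux

variable {K : Type*} [Field K] {ι : Type*} [Fintype ι] [DecidableEq ι]



lemma css_toLin'_eq (B : Matrix ι ι K) : Matrix.toLin' B = Matrix.toLinAlgEquiv' B := rfl

lemma css_toLin'_pow_shift (A : Matrix ι ι K) (μ : K) (k : ℕ) :
    (Matrix.toLin' A - μ • (1 : Module.End K (ι → K))) ^ k
      = Matrix.toLin' ((A - μ • 1) ^ k) := by
  have h : Matrix.toLin' A - μ • (1 : Module.End K (ι → K))
      = Matrix.toLinAlgEquiv' (A - μ • 1) := by
    rw [map_sub, _root_.map_smul, _root_.map_one, css_toLin'_eq]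
  rw [h, css_toLin'_eq, ← map_pow]

lemma css_maxGen_shift (A : Matrix ι ι K) (μ : K) :
    Module.End.maxGenEigenspace (Matrix.toLin' A) μ
      = Module.End.maxGenEigenspace (Matrix.toLin' (A - μ • 1)) 0 := by
  ext x
  simp only [Module.End.mem_maxGenEigenspace]
  refine exists_congr fun k => ?_
  rw [css_toLin'_pow_shift]
  have h2 := css_toLin'_pow_shift (A - μ • 1) 0 k
  simp only [zero_smul, sub_zero, smul_zero] at h2 ⊢
  rw [h2]

lemma css_charpoly_toLin' (A : Matrix ι ι K) :
    (Matrix.toLin' A : Module.End K (ι → K)).charpoly = A.charpoly := by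
  rw [← LinearMap.charpoly_toMatrix (Matrix.toLin' A) (Pi.basisFun K ι),
    LinearMap.toMatrix_eq_toMatrix', LinearMap.toMatrix'_toLin']

lemma css_charpoly_shift (A : Matrix ι ι K) (c : K) :
    (A - c • 1).charpoly = A.charpoly.comp (X + Polynomial.C c) := by
  have hmap : (eval₂RingHom Polynomial.C (X + Polynomial.C c) : K[X] →+* K[X]).mapMatrix
        (charmatrix A) = charmatrix (A - c • (1 : Matrix ι ι K)) := by
    ext i j
    by_cases h : i = j
    · subst h
      simp [RingHom.mapMatrix_apply, charmatrix_apply_eq, Matrix.sub_apply, Matrix.smul_apply,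
        Matrix.one_apply]
      ring
    · simp [RingHom.mapMatrix_apply, charmatrix_apply_ne _ _ _ h, Matrix.sub_apply,
        Matrix.smul_apply, Matrix.one_apply, h]
  calc (A - c • (1 : Matrix ι ι K)).charpoly
      = ((eval₂RingHom Polynomial.C (X + Polynomial.C c) : K[X] →+* K[X]).mapMatrix
          (charmatrix A)).det := by rw [hmap, Matrix.charpoly]
    _ = (eval₂RingHom Polynomial.C (X + Polynomial.C c) : K[X] →+* K[X]) (charmatrix A).det :=
        (RingHom.map_det _ _).symm
    _ = A.charpoly.comp (X + Polynomial.C c) := rfl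

noncomputable def cssR (A : Matrix ι ι K) (μ : K) : ℕ :=
  finrank K ↥(Module.End.maxGenEigenspace (Matrix.toLin' A) μ)

lemma css_finrank_maxGen (A : Matrix ι ι K) (μ : K) :
    cssR A μ = A.charpoly.rootMultiplicity μ := by
  rw [cssR, css_maxGen_shift, LinearMap.finrank_maxGenEigenspace_zero_eq, css_charpoly_toLin',
    css_charpoly_shift, Polynomial.rootMultiplicity_eq_natTrailingDegree]



lemma css_maxGen_eq_ker (A : Matrix ι ι K) (μ : K) :
    Module.End.maxGenEigenspace (Matrix.toLin' A) μ
      = LinearMap.ker (Matrix.mulVecLin ((A - μ • 1) ^ Fintype.card ι)) := by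
  have h1 := Module.End.maxGenEigenspace_eq_genEigenspace_finrank (Matrix.toLin' A) μ
  rw [h1, Module.End.genEigenspace_nat]
  have h2 : (Matrix.toLin' A - μ • (1 : Module.End K (ι → K))) ^ finrank K (ι → K)
      = Matrix.toLin' ((A - μ • 1) ^ Fintype.card ι) := by
    rw [Module.finrank_fintype_fun_eq_card]
    exact css_toLin'_pow_shift A μ (Fintype.card ι)
  rw [h2]
  rfl

lemma css_finrank_ker_mulVecLin (B : Matrix ι ι K) :
    finrank K ↥(LinearMap.ker (Matrix.mulVecLin B)) = Fintype.card ι - B.rank := by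
  have h := LinearMap.finrank_range_add_finrank_ker (Matrix.mulVecLin B)
  have h2 : finrank K (ι → K) = Fintype.card ι := Module.finrank_fintype_fun_eq_card K
  rw [h2] at h
  have : B.rank = finrank K ↥(LinearMap.range (Matrix.mulVecLin B)) := rfl
  omega

lemma cssR_eq_rank (A : Matrix ι ι K) (μ : K) :
    cssR A μ = Fintype.card ι - ((A - μ • 1) ^ Fintype.card ι).rank := by
  rw [cssR, css_maxGen_eq_ker, css_finrank_ker_mulVecLin]

lemma css_rank_smul (c : K) (hc : c ≠ 0) (B : Matrix ι ι K) : (c • B).rank = B.rank := by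
  have h : c • B = (c • (1 : Matrix ι ι K)) * B := by rw [Matrix.smul_mul, one_mul]
  rw [h, Matrix.rank_mul_eq_right_of_isUnit_det]
  simp [Matrix.det_smul, hc]

lemma cssR_unit_conj (u : (Matrix ι ι K)ˣ) (A : Matrix ι ι K) (μ : K) :
    cssR ((u : Matrix ι ι K) * A * ((u⁻¹ : (Matrix ι ι K)ˣ) : Matrix ι ι K)) μ = cssR A μ := by
  rw [cssR_eq_rank, cssR_eq_rank]
  congr 1
  have hdu : IsUnit ((u : Matrix ι ι K)).det := (Matrix.isUnit_iff_isUnit_det _).mp u.isUnit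
  have hdu' : IsUnit (((u⁻¹ : (Matrix ι ι K)ˣ) : Matrix ι ι K)).det :=
    (Matrix.isUnit_iff_isUnit_det _).mp u⁻¹.isUnit
  have h1 : (u : Matrix ι ι K) * A * ((u⁻¹ : (Matrix ι ι K)ˣ) : Matrix ι ι K) - μ • 1
      = (u : Matrix ι ι K) * (A - μ • 1) * ((u⁻¹ : (Matrix ι ι K)ˣ) : Matrix ι ι K) := by
    rw [Matrix.mul_sub, Matrix.sub_mul]
    congr 1
    rw [Matrix.mul_smul, Matrix.smul_mul, mul_one]
    congr 1
    exact (u.mul_inv).symm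
  rw [h1, Units.conj_pow, Matrix.rank_mul_eq_left_of_isUnit_det _ _ hdu',
    Matrix.rank_mul_eq_right_of_isUnit_det _ _ hdu]

lemma cssR_transpose (A : Matrix ι ι K) (μ : K) : cssR Aᵀ μ = cssR A μ := by
  rw [cssR_eq_rank, cssR_eq_rank]
  congr 1
  have h : Aᵀ - μ • 1 = (A - μ • 1)ᵀ := by
    rw [Matrix.transpose_sub, Matrix.transpose_smul, Matrix.transpose_one]
  rw [h, ← Matrix.transpose_pow, Matrix.rank_transpose]

lemma cssR_smul (c : K) (hc : c ≠ 0) (A : Matrix ι ι K) (μ : K) :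
    cssR (c • A) (c * μ) = cssR A μ := by
  rw [cssR_eq_rank, cssR_eq_rank]
  congr 1
  have h : c • A - (c * μ) • 1 = c • (A - μ • 1) := by
    rw [smul_sub, ← smul_assoc, smul_eq_mul]
  rw [h, _root_.smul_pow, css_rank_smul _ (pow_ne_zero _ hc)]

lemma cssR_inv (A : Matrix ι ι K) (hA : IsUnit A.det) (μ : K) (hμ : μ ≠ 0) :
    cssR A⁻¹ μ⁻¹ = cssR A μ := by
  rw [cssR_eq_rank, cssR_eq_rank]
  congr 1
  have hAinv : A⁻¹ * A = 1 := Matrix.nonsing_inv_mul A hA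
  have h : A⁻¹ - μ⁻¹ • 1 = (-μ⁻¹) • (A⁻¹ * (A - μ • 1)) := by
    rw [Matrix.mul_sub, hAinv, Matrix.mul_smul, mul_one]
    match_scalars <;> field_simp
  have hcomm : Commute A⁻¹ (A - μ • 1) := by
    unfold Commute SemiconjBy
    rw [Matrix.mul_sub, Matrix.sub_mul, hAinv, Matrix.mul_nonsing_inv A hA,
      Matrix.mul_smul, Matrix.smul_mul, mul_one, one_mul]
  rw [h, _root_.smul_pow, hcomm.mul_pow, css_rank_smul _ (pow_ne_zero _ (neg_ne_zero.mpr (inv_ne_zero hμ))),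
    Matrix.rank_mul_eq_right_of_isUnit_det]
  rw [Matrix.det_pow]
  exact (isUnit_nonsing_inv_det A hA).pow _

lemma cssR_pair {l : Type*} [Fintype l] [DecidableEq l] (c : K) (hc0 : c ≠ 0)
    (A : Matrix (l ⊕ l) (l ⊕ l) K) (hA : IsUnit A.det)
    (hconf : Aᵀ * Matrix.J l K * A = c • Matrix.J l K) (μ : K) (hμ : μ ≠ 0) :
    cssR A (c / μ) = cssR A μ := by
  have hAT : IsUnit (Aᵀ.det) := by rwa [Matrix.det_transpose]
  have hJu : IsUnit (Matrix.J l K) :=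
    (Matrix.isUnit_iff_isUnit_det _).mpr (Matrix.isUnit_det_J l K)
  obtain ⟨u, hu⟩ := hJu
  have hu' : ((u⁻¹ : (Matrix (l ⊕ l) (l ⊕ l) K)ˣ) : Matrix (l ⊕ l) (l ⊕ l) K)
      = (Matrix.J l K)⁻¹ := by rw [Matrix.coe_units_inv, hu]
  have hJA : Matrix.J l K * A = c • ((Aᵀ)⁻¹ * Matrix.J l K) := by
    have := congrArg (fun X => (Aᵀ)⁻¹ * X) hconf
    simp only [Matrix.mul_smul, ← Matrix.mul_assoc, Matrix.nonsing_inv_mul _ hAT,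
      Matrix.one_mul] at this
    exact this
  have key : (u : Matrix (l ⊕ l) (l ⊕ l) K) * A *
      ((u⁻¹ : (Matrix (l ⊕ l) (l ⊕ l) K)ˣ) : Matrix (l ⊕ l) (l ⊕ l) K) = c • (A⁻¹)ᵀ := by
    rw [hu, hu', Matrix.mul_assoc, ← Matrix.mul_assoc (Matrix.J l K) A, hJA]
    rw [Matrix.smul_mul, Matrix.mul_assoc,
      Matrix.mul_nonsing_inv _ (Matrix.isUnit_det_J l K), Matrix.mul_one,
      Matrix.transpose_nonsing_inv]
  have h1 : cssR A μ = cssR (c • (A⁻¹)ᵀ) μ := by rw [← key, cssR_unit_conj]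
  have h2 : cssR (c • (A⁻¹)ᵀ) μ = cssR A⁻¹ (μ / c) := by
    have : c • (A⁻¹)ᵀ = (c • A⁻¹)ᵀ := by rw [Matrix.transpose_smul]
    rw [this, cssR_transpose]
    have hμc : μ = c * (μ / c) := by field_simp
    conv_lhs => rw [hμc]
    exact cssR_smul c hc0 A⁻¹ (μ / c)
  have h3 : cssR A⁻¹ (μ / c) = cssR A (c / μ) := by
    have : μ / c = (c / μ)⁻¹ := by field_simp
    rw [this]
    exact cssR_inv A hA _ (div_ne_zero hc0 hμ)
  rw [h1, h2, h3]


lemma css_finrank_biSup_le {F W α : Type*} [Field F] [AddCommGroup W] [Module F W]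
    [FiniteDimensional F W] (s : Finset α) (V : α → Submodule F W) :
    finrank F ↥(⨆ i ∈ s, V i) ≤ ∑ i ∈ s, finrank F ↥(V i) := by
  classical
  induction s using Finset.induction_on with
  | empty => simp
  | @insert a t hat ih =>
    rw [Finset.iSup_insert, Finset.sum_insert hat]
    have h := Submodule.finrank_sup_add_finrank_inf_eq (V a) (⨆ i ∈ t, V i)
    have h2 : finrank F ↥(V a ⊔ ⨆ i ∈ t, V i) ≤ finrank F ↥(V a) + finrank F ↥(⨆ i ∈ t, V i) := by
      omega
    exact h2.trans (Nat.add_le_add_left ih _)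

end CssAux

/-- If `M` is a real `2m × 2m` matrix with `Mᵀ J₀ M = C • J₀` for
`C > 1`, and no (complex) eigenvalue of `M` has modulus `1` or equals `0`, then the
sum `E⁻` of the generalized eigenspaces (of the complexification of `M`) for
eigenvalues of modulus `< 1` has dimension at most `m`. -/
theorem conformal_symplectic_stable_space_dim_le (m : ℕ) (C : ℝ) (hC : 1 < C)
    (M : Matrix (Fin m ⊕ Fin m) (Fin m ⊕ Fin m) ℝ)
    (hconf : Mᵀ * Matrix.J (Fin m) ℝ * M = C • Matrix.J (Fin m) ℝ)
    (hhyp : ∀ μ : ℂ, (M.map (algebraMap ℝ ℂ)).charpoly.IsRoot μ →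
      ‖μ‖ ≠ 1 ∧ μ ≠ 0) :
    Module.finrank ℂ
      ↥(⨆ (μ : ℂ) (_ : ‖μ‖ < 1),
        Module.End.maxGenEigenspace (Matrix.toLin' (M.map (algebraMap ℝ ℂ))) μ) ≤ m := by
  classical
  set A := M.map (algebraMap ℝ ℂ) with hA_def
  set p := A.charpoly with hp_def
  have hp_monic : p.Monic := A.charpoly_monic
  have hp_ne : p ≠ 0 := hp_monic.ne_zero
  have hNcard : Fintype.card (Fin m ⊕ Fin m) = 2 * m := by
    simp [Fintype.card_sum]; ring
  have hpdeg : p.natDegree = 2 * m := by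
    rw [hp_def, A.charpoly_natDegree_eq_dim, hNcard]
  -- complexified conformal relation
  have hconfC : Aᵀ * Matrix.J (Fin m) ℂ * A = (C : ℂ) • Matrix.J (Fin m) ℂ := by
    have hmap := congrArg (fun X => X.map (algebraMap ℝ ℂ)) hconf
    simp only [Matrix.map_mul] at hmap
    have hJ : (Matrix.J (Fin m) ℝ).map (algebraMap ℝ ℂ) = Matrix.J (Fin m) ℂ := by
      ext i j
      cases i <;> cases j <;>
        · simp only [Matrix.J, Matrix.map_apply, Matrix.fromBlocks_apply₁₁,
            Matrix.fromBlocks_apply₁₂, Matrix.fromBlocks_apply₂₁, Matrix.fromBlocks_apply₂₂,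
            Matrix.zero_apply, Matrix.neg_apply, Matrix.one_apply, map_zero, map_neg,
            apply_ite (algebraMap ℝ ℂ), _root_.map_one]
    have hT : (Mᵀ).map (algebraMap ℝ ℂ) = Aᵀ := by
      rw [hA_def, Matrix.transpose_map]
    have hsmul : ((C • Matrix.J (Fin m) ℝ).map (algebraMap ℝ ℂ))
        = (C : ℂ) • Matrix.J (Fin m) ℂ := by
      ext i j
      simp only [Matrix.map_apply, Matrix.smul_apply, smul_eq_mul, _root_.map_mul, ← hJ]
      rfl
    rw [hT, hJ, hsmul] at hmap
    exact hmap
  -- A is invertible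
  have hC0 : (C : ℂ) ≠ 0 := by
    simp only [ne_eq, Complex.ofReal_eq_zero]
    linarith
  have hdetA : IsUnit A.det := by
    rw [isUnit_iff_ne_zero]
    intro hdet0
    have hcoeff : p.coeff 0 = 0 := by
      have h := A.det_eq_sign_charpoly_coeff
      rw [hdet0] at h
      rcases mul_eq_zero.mp h.symm with h1 | h2
      · exact absurd h1 (pow_ne_zero _ (by norm_num))
      · exact h2
    have hroot : p.IsRoot 0 := by
      rw [Polynomial.IsRoot, ← Polynomial.coeff_zero_eq_eval_zero]
      exact hcoeff
    exact absurd rfl (hhyp 0 hroot).2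
  -- roots
  have hcard : p.roots.card = 2 * m := by
    rw [← hpdeg]
    exact (Polynomial.splits_iff_card_roots.mp (IsAlgClosed.splits p))
  have hsum_all : ∑ μ ∈ p.roots.toFinset, p.rootMultiplicity μ = 2 * m := by
    rw [← hcard]
    rw [← Multiset.toFinset_sum_count_eq p.roots]
    refine Finset.sum_congr rfl fun μ _ => ?_
    rw [Polynomial.count_roots]
  set S := p.roots.toFinset.filter (fun μ => ‖μ‖ < 1) with hS_def
  set T := p.roots.toFinset \ S with hT_def
  -- each root is nonzero
  have hroot_ne : ∀ μ ∈ p.roots.toFinset, μ ≠ 0 := by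
    intro μ hμ
    exact (hhyp μ (Polynomial.isRoot_of_mem_roots (Multiset.mem_toFinset.mp hμ))).2
  -- pairing
  have hpair : ∀ μ : ℂ, μ ≠ 0 → p.rootMultiplicity ((C : ℂ) / μ) = p.rootMultiplicity μ := by
    intro μ hμ0
    rw [← css_finrank_maxGen, ← css_finrank_maxGen]
    exact cssR_pair (C : ℂ) hC0 A hdetA hconfC μ hμ0
  -- the stable space is inside the biSup over S
  have hle : (⨆ (μ : ℂ) (_ : ‖μ‖ < 1),
        Module.End.maxGenEigenspace (Matrix.toLin' A) μ)
      ≤ ⨆ μ ∈ S, Module.End.maxGenEigenspace (Matrix.toLin' A) μ := by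
    refine iSup_le fun μ => iSup_le fun hμ => ?_
    by_cases hb : Module.End.maxGenEigenspace (Matrix.toLin' A) μ = ⊥
    · rw [hb]; exact bot_le
    · have hroot : μ ∈ S := by
        have hfr : cssR A μ ≠ 0 := by
          intro h0
          exact hb (Submodule.finrank_eq_zero.mp h0)
        rw [css_finrank_maxGen] at hfr
        have : p.IsRoot μ := (Polynomial.rootMultiplicity_pos hp_ne).mp (Nat.pos_of_ne_zero hfr)
        rw [hS_def, Finset.mem_filter, Multiset.mem_toFinset]
        exact ⟨(Polynomial.mem_roots hp_ne).mpr this, hμ⟩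
      exact le_iSup₂ (f := fun μ _ => Module.End.maxGenEigenspace (Matrix.toLin' A) μ) μ hroot
  have hstep1 : finrank ℂ ↥(⨆ (μ : ℂ) (_ : ‖μ‖ < 1),
        Module.End.maxGenEigenspace (Matrix.toLin' A) μ)
      ≤ ∑ μ ∈ S, p.rootMultiplicity μ := by
    refine le_trans (Submodule.finrank_mono hle) ?_
    refine le_trans (css_finrank_biSup_le S _) ?_
    refine le_of_eq (Finset.sum_congr rfl fun μ _ => ?_)
    exact css_finrank_maxGen A μ
  -- the image of S under μ ↦ C/μ lands in T
  have hCgt : (1 : ℝ) < C := hC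
  have himg : S.image (fun μ => (C : ℂ) / μ) ⊆ T := by
    intro ν hν
    rw [Finset.mem_image] at hν
    obtain ⟨μ, hμS, rfl⟩ := hν
    rw [hS_def, Finset.mem_filter] at hμS
    obtain ⟨hμroot, hμlt⟩ := hμS
    have hμ0 : μ ≠ 0 := hroot_ne μ hμroot
    have hmult : 0 < p.rootMultiplicity ((C : ℂ) / μ) := by
      rw [hpair μ hμ0]
      exact (Polynomial.rootMultiplicity_pos hp_ne).mpr
        (Polynomial.isRoot_of_mem_roots (Multiset.mem_toFinset.mp hμroot))
    have hνroot : ((C : ℂ) / μ) ∈ p.roots.toFinset := by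
      rw [Multiset.mem_toFinset, Polynomial.mem_roots hp_ne]
      exact (Polynomial.rootMultiplicity_pos hp_ne).mp hmult
    have habs : ¬ ‖(C : ℂ) / μ‖ < 1 := by
      rw [not_lt, norm_div]
      have h1 : ‖(C : ℂ)‖ = C := by
        rw [Complex.norm_real, Real.norm_eq_abs, abs_of_pos (by linarith)]
      have h2 : 0 < ‖μ‖ := by
        simpa [norm_pos_iff] using hμ0
      rw [h1, le_div_iff₀ h2]
      nlinarith [hμlt, h2]
    rw [hT_def, Finset.mem_sdiff]
    exact ⟨hνroot, by rw [hS_def, Finset.mem_filter]; exact fun h => habs h.2⟩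
  -- sum comparison
  have hinj : ∀ x ∈ S, ∀ y ∈ S, (C : ℂ) / x = (C : ℂ) / y → x = y := by
    intro x hx y hy hxy
    have hx0 : x ≠ 0 := hroot_ne x (Finset.mem_of_mem_filter x hx)
    have hy0 : y ≠ 0 := hroot_ne y (Finset.mem_of_mem_filter y hy)
    rw [div_eq_div_iff hx0 hy0] at hxy
    exact (mul_left_cancel₀ hC0 hxy).symm
  have hsum_img : ∑ ν ∈ S.image (fun μ => (C : ℂ) / μ), p.rootMultiplicity ν
      = ∑ μ ∈ S, p.rootMultiplicity μ := by
    rw [Finset.sum_image hinj]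
    refine Finset.sum_congr rfl fun μ hμ => ?_
    exact hpair μ (hroot_ne μ (Finset.mem_of_mem_filter μ hμ))
  have hST : ∑ μ ∈ S, p.rootMultiplicity μ ≤ ∑ ν ∈ T, p.rootMultiplicity ν := by
    rw [← hsum_img]
    exact Finset.sum_le_sum_of_subset himg
  have hsplit2 : ∑ ν ∈ T, p.rootMultiplicity ν + ∑ μ ∈ S, p.rootMultiplicity μ = 2 * m := by
    rw [hT_def, Finset.sum_sdiff (Finset.filter_subset _ _)]
    exact hsum_all
  omega
end
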